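/- Let f : (0,R] → ℝ be C¹ with: (1) f ∈ L²(0,R); (2) x f(x)² → 0 as x → 0⁺; (3) x f'(x) → 0 as x → 0⁺; (4) (1/r)∫₀^r x (f(r) - f(x)) f'(x) dx → 0 as r → 0⁺. Define the even function u on [-R,R] by u(x) = f(|x|). Then ψ(r) := (1/(2r))∫_{-r}^{r} |u(x) - u_{(-r,r)}|² dx → 0 as r → 0⁺, where u_{(-r,r)} is the average of u over (-r,r). -/

import Mathlib

open MeasureTheory Filter
open Set intervalIntegral

lemma even_integral (r : ℝ) (hr : 0 < r) (g : ℝ → ℝ)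
    (hg : IntegrableOn g (Set.Ioc 0 r)) :
    ∫ x in Set.Ioc (-r) r, g |x| = 2 * ∫ x in Set.Ioc 0 r, g x := by
  have habs : IntegrableOn (fun x => g |x|) (Set.Ioc 0 r) := by
    refine hg.congr_fun (fun x hx => ?_) measurableSet_Ioc
    rw [abs_of_pos hx.1]
  have h1 : IntervalIntegrable (fun x => g |x|) volume 0 r := by
    rwa [intervalIntegrable_iff_integrableOn_Ioc_of_le hr.le]
  have h2 : IntervalIntegrable (fun x => g |x|) volume (-r) 0 := by
    have := (IntervalIntegrable.iff_comp_neg).mp h1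
    simp only [abs_neg, neg_zero] at this
    exact this.symm
  have e0 : ∫ x in (0:ℝ)..r, g |x| = ∫ x in Set.Ioc 0 r, g x := by
    rw [intervalIntegral.integral_of_le hr.le]
    refine setIntegral_congr_fun measurableSet_Ioc (fun x hx => ?_)
    rw [abs_of_pos hx.1]
  have e1 : ∫ x in (-r)..(0:ℝ), g |x| = ∫ x in Set.Ioc 0 r, g x := by
    have := intervalIntegral.integral_comp_neg (a := (0:ℝ)) (b := r) (fun x => g |x|)
    simp only [abs_neg, neg_zero] at this
    rw [← this, e0]
  calc ∫ x in Set.Ioc (-r) r, g |x| = ∫ x in (-r)..r, g |x| := by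
        rw [intervalIntegral.integral_of_le (by linarith)]
    _ = (∫ x in (-r)..(0:ℝ), g |x|) + ∫ x in (0:ℝ)..r, g |x| :=
        (intervalIntegral.integral_add_adjacent_intervals h2 h1).symm
    _ = 2 * ∫ x in Set.Ioc 0 r, g x := by rw [e0, e1]; ring

lemma var_le {μ : Measure ℝ} [IsFiniteMeasure μ] (g : ℝ → ℝ)
    (hg : Integrable g μ) (hg2 : Integrable (fun x => g x ^ 2) μ) (c : ℝ) :
    ∫ x, (g x - ⨍ y, g y ∂μ) ^ 2 ∂μ ≤ ∫ x, (g x - c) ^ 2 ∂μ := by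
  set m : ℝ := (μ Set.univ).toReal with hm
  have expand : ∀ d : ℝ, ∫ x, (g x - d) ^ 2 ∂μ
      = (∫ x, g x ^ 2 ∂μ) - 2 * d * (∫ x, g x ∂μ) + d ^ 2 * m := by
    intro d
    have h1 : (fun x => (g x - d) ^ 2) = fun x => g x ^ 2 - 2 * d * g x + d ^ 2 := by
      ext x; ring
    have ia : Integrable (fun x => g x ^ 2 - 2 * d * g x) μ := hg2.sub (hg.const_mul _)
    have ib : Integrable (fun x => 2 * d * g x) μ := hg.const_mul _
    rw [h1, integral_add ia (integrable_const _),
      integral_sub hg2 ib, MeasureTheory.integral_const_mul, MeasureTheory.integral_const]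
    simp [hm, mul_comm, measureReal_def]
  rw [expand, expand]
  set A : ℝ := ⨍ y, g y ∂μ with hA
  rcases eq_or_ne (μ Set.univ) 0 with h0 | h0
  · have : μ = 0 := by rwa [Measure.measure_univ_eq_zero] at h0
    simp [this, hm, h0]
  · have hm0 : m ≠ 0 := by
      simp only [hm]
      exact (ENNReal.toReal_pos h0 (measure_ne_top _ _)).ne'
    have hint : ∫ x, g x ∂μ = m * A := by
      rw [hA, average_eq, smul_eq_mul, ← mul_assoc, measureReal_def, mul_inv_cancel₀ hm0, one_mul]
    rw [hint]
    have hmpos : 0 ≤ m := ENNReal.toReal_nonneg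
    nlinarith [sq_nonneg (A - c), sq_nonneg (A + c)]

lemma ibp_lemma (R : ℝ) (hR : 0 < R) (f f' : ℝ → ℝ)
    (hderiv : ∀ x ∈ Set.Ioc (0:ℝ) R, HasDerivAt f (f' x) x)
    (hderivc : ContinuousOn f' (Set.Ioc (0:ℝ) R))
    (hL2 : IntegrableOn (fun x => f x ^ 2) (Set.Ioc (0:ℝ) R))
    (h2 : Tendsto (fun x => x * f x ^ 2) (nhdsWithin 0 (Set.Ioi 0)) (nhds 0))
    (h3 : Tendsto (fun x => x * f' x) (nhdsWithin 0 (Set.Ioi 0)) (nhds 0))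
    (r : ℝ) (hr : r ∈ Set.Ioc (0:ℝ) R) :
    ∫ x in Set.Ioc (0:ℝ) r, (f x - f r) ^ 2
      = 2 * ∫ x in Set.Ioc (0:ℝ) r, x * (f r - f x) * f' x := by
  have hsub : Set.Ioc (0:ℝ) r ⊆ Set.Ioc 0 R := Set.Ioc_subset_Ioc_right hr.2
  have hfc : ContinuousOn f (Set.Ioc 0 R) := fun x hx =>
    (hderiv x hx).continuousAt.continuousWithinAt
  -- integrability of f^2, f on Ioc 0 r
  have hf2 : IntegrableOn (fun x => f x ^ 2) (Set.Ioc 0 r) := hL2.mono_set hsub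
  have hmeasf : AEStronglyMeasurable f (volume.restrict (Set.Ioc 0 r)) :=
    (hfc.mono hsub).aestronglyMeasurable measurableSet_Ioc
  have hfi : IntegrableOn f (Set.Ioc 0 r) := by
    refine Integrable.mono' ((hf2.add (integrable_const 1)).const_mul (1/2) : Integrable _ _)
      hmeasf (Filter.Eventually.of_forall fun x => ?_)
    have : |f x| ^ 2 = f x ^ 2 := sq_abs _
    simp only [Real.norm_eq_abs, Pi.add_apply]
    nlinarith [sq_nonneg (|f x| - 1), abs_nonneg (f x)]
  -- bound on x * f' x
  obtain ⟨M, hM⟩ : ∃ M : ℝ, ∀ x ∈ Set.Ioc (0:ℝ) r, |x * f' x| ≤ M := by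
    rw [Metric.tendsto_nhdsWithin_nhds] at h3
    obtain ⟨δ, hδ, hδ'⟩ := h3 1 one_pos
    set δ' := min (δ/2) r with hδ'def
    have hδ'pos : 0 < δ' := lt_min (by linarith) hr.1
    have hcomp : IsCompact (Set.Icc δ' r) := isCompact_Icc
    have hcont : ContinuousOn (fun x => x * f' x) (Set.Icc δ' r) := by
      refine ContinuousOn.mul continuousOn_id (hderivc.mono ?_)
      intro x hx; exact ⟨lt_of_lt_of_le hδ'pos hx.1, hx.2.trans hr.2⟩
    obtain ⟨C, hC⟩ := hcomp.exists_bound_of_continuousOn hcont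
    refine ⟨max C 1, fun x hx => ?_⟩
    rcases lt_or_ge x δ' with h | h
    · have : dist (x * f' x) 0 < 1 := by
        refine hδ' hx.1 ?_
        rw [Real.dist_eq, sub_zero, abs_of_pos hx.1]
        calc x < δ' := h
        _ ≤ δ/2 := min_le_left _ _
        _ < δ := by linarith
      rw [Real.dist_eq, sub_zero] at this
      exact le_max_of_le_right this.le
    · exact le_max_of_le_left (by rw [← Real.norm_eq_abs]; exact hC x ⟨h, hx.2⟩)
  -- integrability of D x = x * (f r - f x) * f' x
  have hcontD : ContinuousOn (fun x => x * (f r - f x) * f' x) (Set.Ioc 0 r) := by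
    refine ContinuousOn.mul (ContinuousOn.mul continuousOn_id ?_) (hderivc.mono hsub)
    exact continuousOn_const.sub (hfc.mono hsub)
  have hDi : IntegrableOn (fun x => x * (f r - f x) * f' x) (Set.Ioc 0 r) := by
    refine Integrable.mono'
      (((integrable_const |f r|).add hfi.abs).const_mul M : Integrable _ _)
      (hcontD.aestronglyMeasurable measurableSet_Ioc) ?_
    rw [ae_restrict_iff' measurableSet_Ioc]
    refine Filter.Eventually.of_forall fun x hx => ?_
    have h1 := hM x hx
    have h2 : |x * (f r - f x) * f' x| = |x * f' x| * |f r - f x| := by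
      rw [← abs_mul]; ring_nf
    rw [Real.norm_eq_abs, h2]
    have : |f r - f x| ≤ |f r| + |f x| := abs_sub _ _
    have hMnn : (0:ℝ) ≤ M := le_trans (abs_nonneg _) h1
    calc |x * f' x| * |f r - f x| ≤ M * (|f r| + |f x|) := by
          apply mul_le_mul h1 this (abs_nonneg _) hMnn
    _ = M * (|f r| + |f x|) := rfl
  -- integrability of (f x - f r)^2
  have hGi : IntegrableOn (fun x => (f x - f r) ^ 2) (Set.Ioc 0 r) := by
    have : (fun x => (f x - f r) ^ 2)
        = fun x => f x ^ 2 - 2 * f r * f x + f r ^ 2 := by ext x; ring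
    rw [this]
    exact (hf2.sub (hfi.const_mul _)).add (integrable_const _)
  -- integrability of the second derivative term
  have hD2i : IntegrableOn (fun x => x * (2 * (f x - f r) * f' x)) (Set.Ioc 0 r) := by
    exact IntegrableOn.congr_fun (show IntegrableOn _ _ _ from hDi.const_mul (-2))
      (fun x hx => by ring) measurableSet_Ioc
  have hcontG : ContinuousOn
      (fun x => (f x - f r) ^ 2 + x * (2 * (f x - f r) * f' x)) (Set.Ioc 0 R) := by
    refine ContinuousOn.add (ContinuousOn.pow (hfc.sub continuousOn_const) 2) ?_
    exact continuousOn_id.mul ((continuousOn_const.mul (hfc.sub continuousOn_const)).mul hderivc)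
  -- splitting set integrals
  have hsplit : ∀ ε ∈ Set.Ioo (0:ℝ) r, ∀ (g : ℝ → ℝ), IntegrableOn g (Set.Ioc 0 r) →
      ∫ x in ε..r, g x = (∫ x in Set.Ioc 0 r, g x) - ∫ x in Set.Ioc 0 ε, g x := by
    intro ε hε g hg
    have h1 : IntervalIntegrable g volume 0 ε := by
      rw [intervalIntegrable_iff_integrableOn_Ioc_of_le hε.1.le]
      exact hg.mono_set (Set.Ioc_subset_Ioc_right hε.2.le)
    have h2 : IntervalIntegrable g volume ε r := by
      rw [intervalIntegrable_iff_integrableOn_Ioc_of_le hε.2.le]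
      exact hg.mono_set (Set.Ioc_subset_Ioc_left hε.1.le)
    have hadd := intervalIntegral.integral_add_adjacent_intervals h1 h2
    rw [intervalIntegral.integral_of_le hε.1.le,
      intervalIntegral.integral_of_le hr.1.le] at hadd
    linarith [hadd]
  -- FTC identity for each small ε
  have key : ∀ ε ∈ Set.Ioo (0:ℝ) r,
      ((∫ x in Set.Ioc (0:ℝ) r, (f x - f r) ^ 2) - ∫ x in Set.Ioc (0:ℝ) ε, (f x - f r) ^ 2)
      + ((∫ x in Set.Ioc (0:ℝ) r, x * (2 * (f x - f r) * f' x))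
          - ∫ x in Set.Ioc (0:ℝ) ε, x * (2 * (f x - f r) * f' x))
      = -(ε * (f ε - f r) ^ 2) := by
    intro ε hε
    have hIccsub : Set.Icc ε r ⊆ Set.Ioc 0 R := fun x hx =>
      ⟨lt_of_lt_of_le hε.1 hx.1, hx.2.trans hr.2⟩
    have hd : ∀ x ∈ Set.uIcc ε r, HasDerivAt (fun y => y * (f y - f r) ^ 2)
        ((f x - f r) ^ 2 + x * (2 * (f x - f r) * f' x)) x := by
      intro x hx
      rw [Set.uIcc_of_le hε.2.le] at hx
      have hx' := hIccsub hx
      have h1 : HasDerivAt (fun y => (f y - f r) ^ 2) (2 * (f x - f r) * f' x) x := by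
        have h0 := ((hderiv x hx').sub_const (f r)).fun_pow 2
        convert h0 using 1 <;> first | rfl | skip
        ring
      have h5 := (hasDerivAt_id x).mul h1
      convert h5 using 1 <;> first | rfl | skip
      simp [id]
    have hmonoIcc : Set.uIcc ε r ⊆ Set.Ioc 0 R := by
      rw [Set.uIcc_of_le hε.2.le]; exact hIccsub
    have hint : IntervalIntegrable
        (fun x => (f x - f r) ^ 2 + x * (2 * (f x - f r) * f' x)) volume ε r :=
      (hcontG.mono hmonoIcc).intervalIntegrable
    have hftc := intervalIntegral.integral_eq_sub_of_hasDerivAt hd hint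
    have hi1 : IntervalIntegrable (fun x => (f x - f r) ^ 2) volume ε r := by
      rw [intervalIntegrable_iff_integrableOn_Ioc_of_le hε.2.le]
      exact hGi.mono_set (Set.Ioc_subset_Ioc_left hε.1.le)
    have hi2 : IntervalIntegrable (fun x => x * (2 * (f x - f r) * f' x)) volume ε r := by
      rw [intervalIntegrable_iff_integrableOn_Ioc_of_le hε.2.le]
      exact hD2i.mono_set (Set.Ioc_subset_Ioc_left hε.1.le)
    rw [intervalIntegral.integral_add hi1 hi2,
      hsplit ε hε _ hGi, hsplit ε hε _ hD2i] at hftc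
    rw [hftc]
    ring
  -- primitive continuity
  have hprim : ∀ (g : ℝ → ℝ), IntegrableOn g (Set.Ioc 0 r) →
      Tendsto (fun ε => ∫ x in Set.Ioc (0:ℝ) ε, g x) (nhdsWithin 0 (Set.Ioi 0)) (nhds 0) := by
    intro g hg
    have hicc : IntegrableOn g (Set.Icc 0 r) := by
      rw [integrableOn_Icc_iff_integrableOn_Ioc]; exact hg
    have hcont := intervalIntegral.continuousOn_primitive hicc
    have h0 : ContinuousWithinAt (fun x => ∫ t in Set.Ioc (0:ℝ) x, g t) (Set.Icc 0 r) 0 :=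
      hcont 0 ⟨le_refl 0, hr.1.le⟩
    have h0' : Tendsto (fun x => ∫ t in Set.Ioc (0:ℝ) x, g t)
        (nhdsWithin 0 (Set.Icc 0 r)) (nhds 0) := by
      have hzero : ∫ t in Set.Ioc (0:ℝ) (0:ℝ), g t = 0 := by simp
      simpa [ContinuousWithinAt, hzero] using h0
    refine h0'.mono_left ?_
    rw [← nhdsWithin_Ioo_eq_nhdsGT hr.1]
    exact nhdsWithin_mono _ Set.Ioo_subset_Icc_self
  have hid : Tendsto (fun ε : ℝ => ε) (nhdsWithin 0 (Set.Ioi 0)) (nhds 0) :=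
    tendsto_id.mono_left nhdsWithin_le_nhds
  -- ε * f ε → 0
  have h5 : Tendsto (fun ε => ε * f ε) (nhdsWithin 0 (Set.Ioi 0)) (nhds 0) := by
    have hsq : Tendsto (fun ε => (ε * f ε) ^ 2) (nhdsWithin 0 (Set.Ioi 0)) (nhds 0) := by
      have he : (fun ε => (ε * f ε) ^ 2) = fun ε => ε * (ε * f ε ^ 2) := by ext ε; ring
      rw [he]
      simpa using hid.mul h2
    rw [tendsto_zero_iff_abs_tendsto_zero]
    have h6 := (Real.continuous_sqrt.tendsto 0).comp hsq
    refine Tendsto.congr (fun ε => ?_) (by simpa using h6)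
    simp [Function.comp, Real.sqrt_sq_eq_abs]
  have hRHS : Tendsto (fun ε => -(ε * (f ε - f r) ^ 2)) (nhdsWithin 0 (Set.Ioi 0)) (nhds 0) := by
    have he : (fun ε => -(ε * (f ε - f r) ^ 2))
        = fun ε => -((ε * f ε ^ 2) - 2 * f r * (ε * f ε) + (f r) ^ 2 * ε) := by ext ε; ring
    rw [he]
    have := ((h2.sub (h5.const_mul (2 * f r))).add (hid.const_mul ((f r) ^ 2))).neg
    simpa using this
  set I1 := ∫ x in Set.Ioc (0:ℝ) r, (f x - f r) ^ 2 with hI1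
  set I2 := ∫ x in Set.Ioc (0:ℝ) r, x * (2 * (f x - f r) * f' x) with hI2
  have hLHS : Tendsto (fun ε => (I1 - ∫ x in Set.Ioc (0:ℝ) ε, (f x - f r) ^ 2)
      + (I2 - ∫ x in Set.Ioc (0:ℝ) ε, x * (2 * (f x - f r) * f' x)))
      (nhdsWithin 0 (Set.Ioi 0)) (nhds (I1 + I2)) := by
    have hc1 : Tendsto (fun _ : ℝ => I1) (nhdsWithin 0 (Set.Ioi 0)) (nhds I1) :=
      tendsto_const_nhds
    have hc2 : Tendsto (fun _ : ℝ => I2) (nhdsWithin 0 (Set.Ioi 0)) (nhds I2) :=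
      tendsto_const_nhds
    have := (hc1.sub (hprim _ hGi)).add (hc2.sub (hprim _ hD2i))
    simpa using this
  have heq : I1 + I2 = 0 := by
    have hev : (fun ε => (I1 - ∫ x in Set.Ioc (0:ℝ) ε, (f x - f r) ^ 2)
        + (I2 - ∫ x in Set.Ioc (0:ℝ) ε, x * (2 * (f x - f r) * f' x)))
        =ᶠ[nhdsWithin 0 (Set.Ioi 0)] fun ε => -(ε * (f ε - f r) ^ 2) := by
      filter_upwards [Ioo_mem_nhdsGT hr.1] with ε hε using key ε hε
    exact tendsto_nhds_unique (hLHS.congr' hev) hRHS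
  have hI2eq : I2 = -2 * ∫ x in Set.Ioc (0:ℝ) r, x * (f r - f x) * f' x := by
    calc I2 = ∫ x in Set.Ioc (0:ℝ) r, (-2) * (x * (f r - f x) * f' x) :=
          setIntegral_congr_fun measurableSet_Ioc (fun x hx => by ring)
    _ = -2 * ∫ x in Set.Ioc (0:ℝ) r, x * (f r - f x) * f' x :=
          MeasureTheory.integral_const_mul _ _
  rw [hI1] at heq
  rw [hI2eq] at heq
  linarith

/-- Bramanti's key lemma: vanishing mean square oscillation of the even extension
`u(x) = f(|x|)` at the origin, for a `C¹` function `f` with mild decay hypotheses. -/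
theorem bramanti_lemma (R : ℝ) (hR : 0 < R) (f f' : ℝ → ℝ)
    (hderiv : ∀ x ∈ Set.Ioc (0:ℝ) R, HasDerivAt f (f' x) x)
    (hderivc : ContinuousOn f' (Set.Ioc (0:ℝ) R))
    (hL2 : IntegrableOn (fun x => f x ^ 2) (Set.Ioc (0:ℝ) R))
    (h2 : Tendsto (fun x => x * f x ^ 2) (nhdsWithin 0 (Set.Ioi 0)) (nhds 0))
    (h3 : Tendsto (fun x => x * f' x) (nhdsWithin 0 (Set.Ioi 0)) (nhds 0))
    (h4 : Tendsto (fun r => (1 / r) * ∫ x in Set.Ioc (0:ℝ) r, x * (f r - f x) * f' x)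
      (nhdsWithin 0 (Set.Ioi 0)) (nhds 0)) :
    Tendsto
      (fun r => (1 / (2 * r)) *
        ∫ x in Set.Ioc (-r) r, (f |x| - ⨍ y in Set.Ioc (-r) r, f |y|) ^ 2)
      (nhdsWithin 0 (Set.Ioi 0)) (nhds 0) := by
  have hmem : Set.Ioc (0:ℝ) R ∈ nhdsWithin 0 (Set.Ioi 0) := Ioc_mem_nhdsGT hR
  have hupper : Tendsto
      (fun r => 2 * ((1/r) * ∫ x in Set.Ioc (0:ℝ) r, x * (f r - f x) * f' x))
      (nhdsWithin 0 (Set.Ioi 0)) (nhds 0) := by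
    simpa using h4.const_mul 2
  refine tendsto_of_tendsto_of_tendsto_of_le_of_le' tendsto_const_nhds hupper ?_ ?_
  · filter_upwards [self_mem_nhdsWithin] with r hr
    have : (0:ℝ) < r := hr
    exact mul_nonneg (by positivity) (integral_nonneg fun x => sq_nonneg _)
  · filter_upwards [hmem] with r hr
    have hrpos : 0 < r := hr.1
    have hsub : Set.Ioc (0:ℝ) r ⊆ Set.Ioc 0 R := Set.Ioc_subset_Ioc_right hr.2
    have hfc : ContinuousOn f (Set.Ioc 0 R) := fun x hx =>
      (hderiv x hx).continuousAt.continuousWithinAt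
    have hf2 : IntegrableOn (fun x => f x ^ 2) (Set.Ioc 0 r) := hL2.mono_set hsub
    have hmeasf : AEStronglyMeasurable f (volume.restrict (Set.Ioc 0 r)) :=
      (hfc.mono hsub).aestronglyMeasurable measurableSet_Ioc
    have hfi : IntegrableOn f (Set.Ioc 0 r) := by
      refine Integrable.mono' ((hf2.add (integrable_const 1)).const_mul (1/2) : Integrable _ _)
        hmeasf (Filter.Eventually.of_forall fun x => ?_)
      have : |f x| ^ 2 = f x ^ 2 := sq_abs _
      simp only [Real.norm_eq_abs, Pi.add_apply]
      nlinarith [sq_nonneg (|f x| - 1), abs_nonneg (f x)]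
    set A : ℝ := ⨍ y in Set.Ioc (-r) r, f |y| with hA
    have hiA : IntegrableOn (fun x => (f x - A) ^ 2) (Set.Ioc 0 r) := by
      have he : (fun x => (f x - A) ^ 2)
          = fun x => f x ^ 2 - 2 * A * f x + A ^ 2 := by ext x; ring
      rw [he]
      exact (hf2.sub (hfi.const_mul _)).add (integrable_const _)
    -- step 1 : evenness
    have step1 : ∫ x in Set.Ioc (-r) r, (f |x| - A) ^ 2
        = 2 * ∫ x in Set.Ioc (0:ℝ) r, (f x - A) ^ 2 :=
      even_integral r hrpos (fun y => (f y - A) ^ 2) hiA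
    -- step 2 : the average equals the one-sided average
    have step2 : A = ⨍ y in Set.Ioc (0:ℝ) r, f y := by
      rw [hA, setAverage_eq, setAverage_eq, even_integral r hrpos f hfi,
        measureReal_def, measureReal_def, Real.volume_Ioc, Real.volume_Ioc]
      rw [ENNReal.toReal_ofReal (by linarith), ENNReal.toReal_ofReal (by linarith)]
      field_simp
      ring
    -- step 3 : variance inequality
    haveI : IsFiniteMeasure (volume.restrict (Set.Ioc (0:ℝ) r)) :=
      ⟨by rw [Measure.restrict_apply_univ]; exact measure_Ioc_lt_top⟩
    have step3 : ∫ x in Set.Ioc (0:ℝ) r, (f x - A) ^ 2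
        ≤ ∫ x in Set.Ioc (0:ℝ) r, (f x - f r) ^ 2 := by
      have := var_le (μ := volume.restrict (Set.Ioc (0:ℝ) r)) f hfi hf2 (f r)
      rwa [← step2] at this
    -- step 4 : integration by parts
    have step4 := ibp_lemma R hR f f' hderiv hderivc hL2 h2 h3 r hr
    rw [step1]
    have h2r : (1:ℝ)/(2*r) * 2 = 1/r := by field_simp
    calc (1/(2*r)) * (2 * ∫ x in Set.Ioc (0:ℝ) r, (f x - A) ^ 2)
        = (1/r) * ∫ x in Set.Ioc (0:ℝ) r, (f x - A) ^ 2 := by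
          rw [← mul_assoc, h2r]
      _ ≤ (1/r) * ∫ x in Set.Ioc (0:ℝ) r, (f x - f r) ^ 2 := by
          apply mul_le_mul_of_nonneg_left step3 (by positivity)
      _ = 2 * ((1/r) * ∫ x in Set.Ioc (0:ℝ) r, x * (f r - f x) * f' x) := by
          rw [step4]; ring
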